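/- arXiv:2306.17345 — 2 statements merged into one kernel-verified Lean document; each statement's English description precedes it below -/
import Mathlib

section
/- Let (B_0, B_1, r, s) be a quantum quiver where B_0 and B_1 carry δ-forms ψ_0, ψ_1 (for the same δ > 0). Let m_1 : B_1 ⊗ B_1 → B_1 be multiplication, m_1* its Hilbert-space adjoint with respect to ψ_1, and r* : B_1 → B_0 the adjoint of r. Then m_1 ∘ (s r* ⊗ s r*) ∘ m_1* = δ² · (s r*); that is, (B_1, ψ_1, s r*) is a quantum graph. -/
open TensorProduct

/-- Let `(B₀, B₁, r, s)` be a quantum quiver whose algebras carry δ-forms (for the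
same `δ > 0`), so that `B₀, B₁` become Hilbert spaces `L²(Bᵢ)`; let `mᵢ` be the
multiplication maps, `mᵢ*` their Hilbert space adjoints (characterised against the
induced inner product on the tensor square), and `r*` the adjoint of `r`.  Then
`m₁ ∘ (s r* ⊗ s r*) ∘ m₁* = δ² · (s r*)`, i.e. `(B₁, ψ₁, s r*)` is a quantum graph. -/
theorem stmt7 {B0 B1 : Type*}
    [NormedAddCommGroup B0] [InnerProductSpace ℂ B0] [FiniteDimensional ℂ B0]
    [NormedAddCommGroup B1] [InnerProductSpace ℂ B1] [FiniteDimensional ℂ B1]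
    (δ : ℝ) (hδ : 0 < δ)
    (m0 : TensorProduct ℂ B0 B0 →ₗ[ℂ] B0) (m1 : TensorProduct ℂ B1 B1 →ₗ[ℂ] B1)
    (m0s : B0 →ₗ[ℂ] TensorProduct ℂ B0 B0) (m1s : B1 →ₗ[ℂ] TensorProduct ℂ B1 B1)
    -- the induced inner products on the tensor squares
    (innT0 : TensorProduct ℂ B0 B0 → TensorProduct ℂ B0 B0 → ℂ)
    (innT1 : TensorProduct ℂ B1 B1 → TensorProduct ℂ B1 B1 → ℂ)
    (hinnT0 : ∀ a b c d : B0, innT0 (a ⊗ₜ[ℂ] b) (c ⊗ₜ[ℂ] d) =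
      (inner ℂ a c : ℂ) * (inner ℂ b d : ℂ))
    (hinnT1 : ∀ a b c d : B1, innT1 (a ⊗ₜ[ℂ] b) (c ⊗ₜ[ℂ] d) =
      (inner ℂ a c : ℂ) * (inner ℂ b d : ℂ))
    (hadd0l : ∀ x x' y, innT0 (x + x') y = innT0 x y + innT0 x' y)
    (hadd0r : ∀ x y y', innT0 x (y + y') = innT0 x y + innT0 x y')
    (hadd1l : ∀ x x' y, innT1 (x + x') y = innT1 x y + innT1 x' y)
    (hadd1r : ∀ x y y', innT1 x (y + y') = innT1 x y + innT1 x y')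
    -- `m0s`, `m1s` are the adjoints (comultiplications) of the multiplications
    (hadj0 : ∀ (t : TensorProduct ℂ B0 B0) (z : B0), (inner ℂ (m0 t) z : ℂ) = innT0 t (m0s z))
    (hadj1 : ∀ (t : TensorProduct ℂ B1 B1) (z : B1), (inner ℂ (m1 t) z : ℂ) = innT1 t (m1s z))
    -- the δ-form conditions `mᵢ mᵢ* = δ² id`
    (hform0 : m0 ∘ₗ m0s = ((δ : ℂ) ^ 2) • LinearMap.id)
    (hform1 : m1 ∘ₗ m1s = ((δ : ℂ) ^ 2) • LinearMap.id)
    -- the quiver maps, which are multiplicative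
    (r s : B0 →ₗ[ℂ] B1)
    (hr : ∀ x y : B0, r (m0 (x ⊗ₜ[ℂ] y)) = m1 (r x ⊗ₜ[ℂ] r y))
    (hs : ∀ x y : B0, s (m0 (x ⊗ₜ[ℂ] y)) = m1 (s x ⊗ₜ[ℂ] s y)) :
    m1 ∘ₗ TensorProduct.map (s ∘ₗ LinearMap.adjoint r) (s ∘ₗ LinearMap.adjoint r) ∘ₗ m1s
      = ((δ : ℂ) ^ 2) • (s ∘ₗ LinearMap.adjoint r) := by

  have hz0l : ∀ y, innT0 0 y = 0 := fun y => by
    have h := (hadd0l 0 0 y).symm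
    rw [zero_add] at h
    exact add_eq_left.mp h
  have hz0r : ∀ x, innT0 x 0 = 0 := fun x => by
    have h := (hadd0r x 0 0).symm
    rw [zero_add] at h
    exact add_eq_left.mp h
  have hz1l : ∀ y, innT1 0 y = 0 := fun y => by
    have h := (hadd1l 0 0 y).symm
    rw [zero_add] at h
    exact add_eq_left.mp h
  have hz1r : ∀ x, innT1 x 0 = 0 := fun x => by
    have h := (hadd1r x 0 0).symm
    rw [zero_add] at h
    exact add_eq_left.mp h
  set rs := LinearMap.adjoint r with hrsdef
  -- key: pairing compatibility between r ⊗ r and r* ⊗ r*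
  have L : ∀ (u : TensorProduct ℂ B1 B1) (t : TensorProduct ℂ B0 B0),
      innT0 (TensorProduct.map rs rs u) t = innT1 u (TensorProduct.map r r t) := by
    intro u
    induction u using TensorProduct.induction_on with
    | zero => intro t; simp [hz0l, hz1l]
    | tmul c d =>
      intro t
      induction t using TensorProduct.induction_on with
      | zero => simp [hz0r, hz1r]
      | tmul a b =>
        simp only [TensorProduct.map_tmul, hinnT0, hinnT1, hrsdef,
          LinearMap.adjoint_inner_left]
      | add t1 t2 ih1 ih2 =>
        simp only [map_add, hadd0r, hadd1r, ih1, ih2]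
    | add u1 u2 ih1 ih2 =>
      intro t
      simp only [map_add, hadd0l, hadd1l, ih1 t, ih2 t]
  -- conjugate symmetry of innT1
  have Csym : ∀ x y : TensorProduct ℂ B1 B1, innT1 x y = (starRingEnd ℂ) (innT1 y x) := by
    intro x
    induction x using TensorProduct.induction_on with
    | zero => intro y; simp [hz1l, hz1r]
    | tmul a b =>
      intro y
      induction y using TensorProduct.induction_on with
      | zero => simp [hz1l, hz1r]
      | tmul c d => simp [hinnT1, mul_comm]
      | add y1 y2 ih1 ih2 => simp only [hadd1l, hadd1r, ih1, ih2, map_add]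
    | add x1 x2 ih1 ih2 =>
      intro y
      simp only [hadd1l, hadd1r, ih1 y, ih2 y, map_add]
  -- multiplicativity extended to tensors
  have hrT : ∀ t : TensorProduct ℂ B0 B0, m1 (TensorProduct.map r r t) = r (m0 t) := by
    intro t
    induction t using TensorProduct.induction_on with
    | zero => simp
    | tmul a b => simp [TensorProduct.map_tmul, hr]
    | add t1 t2 ih1 ih2 => simp [map_add, ih1, ih2]
  have hsT : ∀ t : TensorProduct ℂ B0 B0, m1 (TensorProduct.map s s t) = s (m0 t) := by
    intro t
    induction t using TensorProduct.induction_on with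
    | zero => simp
    | tmul a b => simp [TensorProduct.map_tmul, hs]
    | add t1 t2 ih1 ih2 => simp [map_add, ih1, ih2]
  have hf0 : ∀ w : B0, m0 (m0s w) = ((δ : ℂ) ^ 2) • w := by
    intro w
    have := LinearMap.congr_fun hform0 w
    simpa using this
  have key : ∀ z : B1, m0 (TensorProduct.map rs rs (m1s z)) = ((δ : ℂ) ^ 2) • rs z := by
    intro z
    apply ext_inner_right ℂ
    intro w
    calc (inner ℂ (m0 (TensorProduct.map rs rs (m1s z))) w : ℂ)
        = innT0 (TensorProduct.map rs rs (m1s z)) (m0s w) := hadj0 _ _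
      _ = innT1 (m1s z) (TensorProduct.map r r (m0s w)) := L _ _
      _ = (starRingEnd ℂ) (innT1 (TensorProduct.map r r (m0s w)) (m1s z)) := Csym _ _
      _ = (starRingEnd ℂ) (inner ℂ (m1 (TensorProduct.map r r (m0s w))) z : ℂ) := by
          rw [hadj1]
      _ = (starRingEnd ℂ) (inner ℂ (r (m0 (m0s w))) z : ℂ) := by rw [hrT]
      _ = (starRingEnd ℂ) (inner ℂ (((δ : ℂ) ^ 2) • r w) z : ℂ) := by
          rw [hf0, map_smul]
      _ = (inner ℂ (((δ : ℂ) ^ 2) • rs z) w : ℂ) := by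
          rw [inner_smul_left, inner_smul_left, map_mul]
          simp [hrsdef, LinearMap.adjoint_inner_left, inner_conj_symm,
            ← Complex.ofReal_pow]
  ext z
  simp only [LinearMap.comp_apply, LinearMap.smul_apply]
  rw [show (s ∘ₗ rs) = s ∘ₗ rs from rfl, TensorProduct.map_comp, LinearMap.comp_apply,
    hsT, key, map_smul]
end

section
/- Let (B_0, B_1, r, s) be a complete quantum quiver with B_0 = ∏_{w ∈ I_0} M_{n_w}(ℂ). Then for each v ∈ I_0, the integer ∑_{w ∈ I_0} n_w is a multiple of n_v. -/
open Matrix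

lemma trace_nat_of_idem {N : ℕ} (q : Matrix (Fin N) (Fin N) ℂ) (hq : q * q = q) :
    ∃ k : ℕ, q.trace = (k : ℂ) := by
  set f := Matrix.toLin' q with hf
  have hff : f ∘ₗ f = f := by
    rw [hf, ← Matrix.toLin'_mul, hq]
  obtain ⟨p, hp⟩ := (LinearMap.isProj_iff_isIdempotentElem f).mpr hff
  refine ⟨Module.finrank ℂ p, ?_⟩
  have h1 : LinearMap.trace ℂ (Fin N → ℂ) f = (Module.finrank ℂ p : ℂ) := hp.trace
  have h2 : LinearMap.trace ℂ (Fin N → ℂ) f = q.trace := by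
    rw [LinearMap.trace_eq_matrix_trace ℂ (Pi.basisFun ℂ (Fin N)) f,
        LinearMap.toMatrix_eq_toMatrix', hf, LinearMap.toMatrix'_toLin']
  rw [← h2, h1]

lemma one_eq_sum_std {N : ℕ} :
    (1 : Matrix (Fin N) (Fin N) ℂ) = ∑ i : Fin N, Matrix.single i i (1 : ℂ) := by
  ext a b
  rw [Matrix.sum_apply]
  by_cases h : a = b
  · subst h
    rw [Finset.sum_eq_single a (fun c _ hc => Matrix.single_apply_of_row_ne hc c a 1)
      (by simp)]
    simp [Matrix.one_apply]
  · rw [Finset.sum_eq_zero (fun c _ => ?_), Matrix.one_apply_ne h]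
    by_cases hc : c = a
    · subst hc; exact Matrix.single_apply_of_col_ne c c h 1
    · exact Matrix.single_apply_of_row_ne hc c b 1

/-- Let `(B₀, B₁, r, s)` be a complete quantum quiver with `B₀ = ∏_w M_{n w}(ℂ)` and
`B₁ = ∏_α M_{m α}(ℂ)`: writing `r*` for the adjoint of `r` with respect to the trace
inner products, completeness means `r* (s 1_v) = 1` for the unit `1_v` of each matrix
block of `B₀`.  Then `∑ w, n w` is a multiple of each `n v`. -/
theorem stmt9 {I0 I1 : Type*} [Fintype I0] [Fintype I1] [DecidableEq I0]
    (n : I0 → ℕ) (m : I1 → ℕ)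
    (r s : (∀ v : I0, Matrix (Fin (n v)) (Fin (n v)) ℂ) →⋆ₐ[ℂ]
      (∀ α : I1, Matrix (Fin (m α)) (Fin (m α)) ℂ))
    (rstar : (∀ α : I1, Matrix (Fin (m α)) (Fin (m α)) ℂ) →ₗ[ℂ]
      (∀ v : I0, Matrix (Fin (n v)) (Fin (n v)) ℂ))
    -- `rstar` is the adjoint of `r` with respect to the trace inner products
    (hadj : ∀ x y, ∑ α : I1, ((r x α)ᴴ * y α).trace =
      ∑ v : I0, ((x v)ᴴ * rstar y v).trace)
    -- completeness: `r* ∘ s` sends each block unit to the unit of `B₀`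
    (hcomplete : ∀ v : I0, rstar (s (Pi.single v 1)) = 1) :
    ∀ v : I0, (n v : ℕ) ∣ ∑ w : I0, n w := by
  intro v
  set p : ∀ w : I0, Matrix (Fin (n w)) (Fin (n w)) ℂ := Pi.single v 1 with hp
  -- the key trace identity from the adjoint relation and completeness
  have key : ∑ α : I1, (s p α).trace = (∑ w : I0, (n w : ℂ)) := by
    have h := hadj 1 (s p)
    simp only [_root_.map_one, Pi.one_apply, Matrix.conjTranspose_one, one_mul,
      ← hp, (show rstar (s p) = 1 from hcomplete v)] at h
    simpa [Matrix.trace_one] using h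
  -- each block trace is a multiple of n v
  have hblock : ∀ α : I1, ∃ k : ℕ, (s p α).trace = (n v : ℂ) * k := by
    intro α
    by_cases h0 : n v = 0
    · refine ⟨0, ?_⟩
      have : p = 0 := by
        ext w i j
        by_cases hw : w = v
        · subst hw; exact absurd i.2 (by omega)
        · simp [hp, Pi.single_eq_of_ne hw]
      simp [this, h0]
    · have hpos : 0 < n v := Nat.pos_of_ne_zero h0
      set i0 : Fin (n v) := ⟨0, hpos⟩
      -- φ a = s (Pi.single v a) α is multiplicative
      have hmul : ∀ a b : Matrix (Fin (n v)) (Fin (n v)) ℂ,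
          s (Pi.single v (a * b)) α = s (Pi.single v a) α * s (Pi.single v b) α := by
        intro a b
        rw [Pi.single_mul, _root_.map_mul]
        rfl
      have hsum : s p α = ∑ i : Fin (n v), s (Pi.single v (Matrix.single i i (1:ℂ))) α := by
        rw [hp, one_eq_sum_std]
        rw [show (Pi.single v (∑ i : Fin (n v), Matrix.single i i (1:ℂ)) :
              ∀ w : I0, Matrix (Fin (n w)) (Fin (n w)) ℂ)
            = ∑ i : Fin (n v), Pi.single v (Matrix.single i i (1:ℂ)) from by
          ext w
          by_cases hw : w = v
          · subst hw; simp
          · simp [Pi.single_eq_of_ne hw]]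
        rw [map_sum]
        simp [Finset.sum_apply]
      -- each diagonal piece has the same trace
      set q : Matrix (Fin (m α)) (Fin (m α)) ℂ :=
        s (Pi.single v (Matrix.single i0 i0 (1:ℂ))) α with hq
      have htr : ∀ i : Fin (n v),
          (s (Pi.single v (Matrix.single i i (1:ℂ))) α).trace = q.trace := by
        intro i
        have e1 : Matrix.single i i (1:ℂ) = Matrix.single i i0 1 * Matrix.single i0 i 1 := by
          simp
        have e2 : Matrix.single i0 i0 (1:ℂ) = Matrix.single i0 i 1 * Matrix.single i i0 1 := by
          simp
        rw [e1, hmul, Matrix.trace_mul_comm, ← hmul, ← e2, hq]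
      have hidem : q * q = q := by
        rw [hq, ← hmul]
        simp
      obtain ⟨k, hk⟩ := trace_nat_of_idem q hidem
      refine ⟨k, ?_⟩
      rw [hsum, Matrix.trace_sum]
      simp_rw [htr]
      rw [Finset.sum_const, Finset.card_univ, Fintype.card_fin, hk, nsmul_eq_mul]
  choose k hk using hblock
  have final : (∑ w : I0, (n w : ℂ)) = (n v : ℂ) * (∑ α : I1, (k α : ℂ)) := by
    rw [← key, Finset.mul_sum]
    exact Finset.sum_congr rfl fun α _ => hk α
  have : ((∑ w : I0, n w : ℕ) : ℂ) = ((n v * ∑ α : I1, k α : ℕ) : ℂ) := by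
    push_cast
    exact final
  exact ⟨∑ α : I1, k α, Nat.cast_injective this⟩
end
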